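/- Let R be a ring and let {Mᵢ : i ∈ I} be a family of locally injective left R-modules. Then the direct sum ⊕_{i∈I} Mᵢ is locally injective. Moreover, if the direct sum is additionally pure-injective and absolutely pure, then it is injective. -/

import Mathlib

universe u v

/-- A submodule `A ≤ M` is pure if every finite system of `R`-linear equations with
parameters in `A` that is solvable in `M` is solvable in `A`. -/
def IsPureSubmodule (R : Type u) [Ring R] {M : Type v} [AddCommGroup M] [Module R M]
    (A : Submodule R M) : Prop :=
  ∀ (k n : ℕ) (c : Fin k → Fin n → R) (a : Fin k → M),
    (∀ i, a i ∈ A) →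
    (∃ x : Fin n → M, ∀ i, (∑ j, c i j • x j) = a i) →
    ∃ x : Fin n → M, (∀ j, x j ∈ A) ∧ ∀ i, (∑ j, c i j • x j) = a i

/-- A linear map is a pure embedding if it is injective and its range is a pure submodule. -/
def IsPureEmbedding (R : Type u) [Ring R] {M N : Type v} [AddCommGroup M] [Module R M]
    [AddCommGroup N] [Module R N] (f : M →ₗ[R] N) : Prop :=
  Function.Injective f ∧ IsPureSubmodule R (LinearMap.range f)

/-- A module is pure-injective if it is a direct summand of every module containing it
as a pure submodule, i.e. every pure embedding out of it admits a retraction. -/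
def IsPureInjective (R : Type u) [Ring R] (M : Type v) [AddCommGroup M] [Module R M] : Prop :=
  ∀ (N : Type v) [AddCommGroup N] [Module R N] (f : M →ₗ[R] N),
    IsPureEmbedding R f → ∃ g : N →ₗ[R] M, g ∘ₗ f = LinearMap.id

/-- A module is absolutely pure if it is pure in every module containing it. -/
def IsAbsolutelyPure (R : Type u) [Ring R] (M : Type v) [AddCommGroup M] [Module R M] : Prop :=
  ∀ (N : Type v) [AddCommGroup N] [Module R N] (f : M →ₗ[R] N),
    Function.Injective f → IsPureSubmodule R (LinearMap.range f)

/-- A module is locally injective if every finite tuple is contained in an injective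
submodule. -/
def IsLocallyInjectiveModule (R : Type u) [Ring R] (M : Type v) [AddCommGroup M]
    [Module R M] : Prop :=
  ∀ (n : ℕ) (a : Fin n → M), ∃ S : Submodule R M, (∀ i, a i ∈ S) ∧ Module.Injective R ↥S


open CategoryTheory DirectSum in
private lemma myPiInj (R : Type u) [Ring R] {η : Type u} (S : η → Type u)
    [∀ i, AddCommGroup (S i)] [∀ i, Module R (S i)]
    (hS : ∀ i, Module.Injective R (S i)) : Module.Injective R (∀ i, S i) := by
  constructor
  intro X Y _ _ _ _ f hf g
  choose hmap hprop using fun i => (hS i).out f hf ((LinearMap.proj i) ∘ₗ g)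
  exact ⟨LinearMap.pi hmap, fun x => funext fun i => hprop i x⟩

private lemma myEquivInj (R : Type u) [Ring R] {A B : Type u} [AddCommGroup A] [Module R A]
    [AddCommGroup B] [Module R B] (e : A ≃ₗ[R] B) (hA : Module.Injective R A) :
    Module.Injective R B := by
  constructor
  intro X Y _ _ _ _ f hf g
  obtain ⟨hm, hp⟩ := hA.out f hf (e.symm.toLinearMap ∘ₗ g)
  refine ⟨e.toLinearMap ∘ₗ hm, fun x => ?_⟩
  simp [hp x]

/-- a direct sum of locally injective modules is locally injective;
moreover if it is additionally pure-injective and absolutely pure, it is injective. -/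
theorem stmt19 (R : Type u) [Ring R] (ι : Type u) (M : ι → Type u)
    [∀ i, AddCommGroup (M i)] [∀ i, Module R (M i)]
    (h : ∀ i, IsLocallyInjectiveModule R (M i)) :
    IsLocallyInjectiveModule R (DirectSum ι M) ∧
      (IsPureInjective R (DirectSum ι M) → IsAbsolutelyPure R (DirectSum ι M) →
        Module.Injective R (DirectSum ι M)) := by
  classical
  constructor
  · -- the direct sum is locally injective
    intro n a
    choose S hSmem hSinj using fun i => h i n (fun k => a k i)
    set s : Finset ι := Finset.univ.biUnion (fun k : Fin n => (a k).support) with hs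
    let Φ : (∀ i : s, ↥(S i)) →ₗ[R] DirectSum ι M :=
      ∑ i : s, (DirectSum.lof R ι M i) ∘ₗ (S i.1).subtype ∘ₗ (LinearMap.proj i)
    have hΦ : ∀ (x : ∀ i : s, ↥(S i)) (j : s),
        DirectSum.component R ι M (j : ι) (Φ x) = (x j : M (j : ι)) := by
      intro x j
      simp only [Φ, LinearMap.sum_apply, map_sum, LinearMap.comp_apply]
      rw [Finset.sum_eq_single j]
      · exact DirectSum.component.lof_self R (j : ι) _
      · intro i _ hij
        rw [DirectSum.component.of, dif_neg (fun hc => hij (Subtype.ext hc))]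
      · intro hj; exact absurd (Finset.mem_univ j) hj
    have hΦinj : Function.Injective Φ := by
      intro x y hxy
      funext j
      exact Subtype.ext (by rw [← hΦ x j, ← hΦ y j, hxy])
    refine ⟨LinearMap.range Φ, ?_, ?_⟩
    · intro k
      refine ⟨fun i => ⟨a k i, hSmem i k⟩, ?_⟩
      have : Φ (fun i => ⟨a k i, hSmem i k⟩) = ∑ i : s, DirectSum.of M i (a k i) := by
        simp only [Φ, LinearMap.sum_apply, LinearMap.comp_apply, DirectSum.lof_eq_of]
        rfl
      rw [this, Finset.sum_coe_sort s (fun i => DirectSum.of M i (a k i))]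
      refine ((Finset.sum_subset ?_ ?_).symm).trans (DirectSum.sum_support_of (a k))
      · intro i hi
        exact Finset.mem_biUnion.mpr ⟨k, Finset.mem_univ k, hi⟩
      · intro i _ hi
        rw [DFinsupp.notMem_support_iff.mp hi, map_zero]
    · exact myEquivInj R (LinearEquiv.ofInjective Φ hΦinj)
        (myPiInj R (fun i : s => ↥(S i)) (fun i => hSinj i))
  · -- pure-injective + absolutely pure implies injective
    intro hpi habs
    set D := DirectSum ι M with hD
    have : CategoryTheory.EnoughInjectives (ModuleCat.{u} R) := inferInstance
    set E := CategoryTheory.Injective.under (ModuleCat.of R D) with hE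
    have hEinj : CategoryTheory.Injective E := inferInstance
    let f : D →ₗ[R] E := (CategoryTheory.Injective.ι (ModuleCat.of R D)).hom
    have hfinj : Function.Injective f := by
      have : CategoryTheory.Mono (CategoryTheory.Injective.ι (ModuleCat.of R D)) := inferInstance
      exact (ModuleCat.mono_iff_injective
        (CategoryTheory.Injective.ι (ModuleCat.of R D))).mp this
    have hEmod : Module.Injective R E := by
      have : CategoryTheory.Injective (ModuleCat.of R E) := hEinj
      exact Module.injective_module_of_injective_object R E
    obtain ⟨g, hg⟩ := hpi E f ⟨hfinj, habs E f hfinj⟩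
    constructor
    intro X Y _ _ _ _ φ hφ ψ
    obtain ⟨hm, hp⟩ := hEmod.out φ hφ (f ∘ₗ ψ)
    refine ⟨g ∘ₗ hm, fun x => ?_⟩
    have := LinearMap.congr_fun hg (ψ x)
    simp only [LinearMap.comp_apply, hp x, LinearMap.id_apply] at this ⊢
    exact this
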